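/- Let λ > 0, C ∈ ℝ^{m×n}, and let μ ∈ Σ_m and ν ∈ Σ_n have all entries strictly positive. If π* minimizes ⟨π, C⟩ − H(π)/λ over U(μ,ν), then every entry of π* is strictly positive, and there exist vectors a ∈ ℝ^m and b ∈ ℝ^n such that π*_{ij} = exp(λ(a_i + b_j − C_{ij})) for all i, j. -/

import Mathlib

/-- Membership in the transport polytope `U(μ, ν)`. -/
def inU {m n : ℕ} (μ : Fin m → ℝ) (ν : Fin n → ℝ) (π : Matrix (Fin m) (Fin n) ℝ) : Prop :=
  (∀ i j, 0 ≤ π i j) ∧ (∀ i, ∑ j, π i j = μ i) ∧ (∀ j, ∑ i, π i j = ν j)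

/-- The entropy-regularized optimal transport objective `⟨π, C⟩ - H(π)/λ`, where
`H(π) = -∑ᵢⱼ πᵢⱼ (log πᵢⱼ - 1)`. -/
noncomputable def rotObj {m n : ℕ} (C : Matrix (Fin m) (Fin n) ℝ) (lam : ℝ)
    (π : Matrix (Fin m) (Fin n) ℝ) : ℝ :=
  (∑ i, ∑ j, π i j * C i j) - (-∑ i, ∑ j, π i j * (Real.log (π i j) - 1)) / lam

noncomputable def phi (x : ℝ) : ℝ := x * (Real.log x - 1)

lemma phi_diff_le {x y : ℝ} (hx : 0 ≤ x) (hy : 0 < y) :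
    phi y - phi x ≤ (y - x) * Real.log y := by
  rcases eq_or_lt_of_le hx with h | h
  · simp [phi, ← h]
    nlinarith [hy.le]
  · have hlog : Real.log (y / x) ≤ y / x - 1 := Real.log_le_sub_one_of_pos (by positivity)
    rw [Real.log_div hy.ne' h.ne'] at hlog
    have hx' : x * (Real.log y - Real.log x) ≤ y - x := by
      have := mul_le_mul_of_nonneg_left hlog h.le
      rw [mul_sub] at this
      calc x * (Real.log y - Real.log x) = x * (Real.log y - Real.log x) := rfl
        _ ≤ x * (y / x) - x * 1 := by nlinarith [this]
        _ = y - x := by field_simp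
    simp only [phi]
    nlinarith [hx']

lemma sum_cycle_eq {m n : ℕ} (i0 i1 : Fin m) (j0 j1 : Fin n) (hi : i0 ≠ i1) (hj : j0 ≠ j1)
    (F G : Fin m → Fin n → ℝ)
    (h0 : ∀ k l, ((k ≠ i0 ∧ k ≠ i1) ∨ (l ≠ j0 ∧ l ≠ j1)) → F k l = G k l) :
    ∑ k, ∑ l, F k l = (∑ k, ∑ l, G k l) + (F i0 j0 - G i0 j0) + (F i0 j1 - G i0 j1)
      + (F i1 j0 - G i1 j0) + (F i1 j1 - G i1 j1) := by
  have h2 : ∀ k, ∑ l, (F k l - G k l) = (F k j0 - G k j0) + (F k j1 - G k j1) := by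
    intro k
    rw [← Finset.sum_subset (Finset.subset_univ ({j0, j1} : Finset (Fin n)))
      (by intro l _ hl; simp at hl; rw [h0 k l (Or.inr ⟨hl.1, hl.2⟩)]; ring)]
    rw [Finset.sum_pair hj]
  have h3 : ∑ k, ∑ l, (F k l - G k l)
      = ((F i0 j0 - G i0 j0) + (F i0 j1 - G i0 j1)) + ((F i1 j0 - G i1 j0) + (F i1 j1 - G i1 j1)) := by
    rw [← Finset.sum_subset (Finset.subset_univ ({i0, i1} : Finset (Fin m)))
      (by intro k _ hk; simp at hk
          exact Finset.sum_eq_zero fun l _ => by rw [h0 k l (Or.inl ⟨hk.1, hk.2⟩)]; ring)]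
    rw [Finset.sum_pair hi, h2 i0, h2 i1]
  have h4 : ∑ k, ∑ l, (F k l - G k l) = (∑ k, ∑ l, F k l) - ∑ k, ∑ l, G k l := by
    simp [Finset.sum_sub_distrib]
  linarith [h3, h4]

noncomputable def uvec {m : ℕ} (i0 i1 : Fin m) : Fin m → ℝ :=
  fun k => (if k = i0 then 1 else 0) - (if k = i1 then 1 else 0)

lemma uvec_sum {m : ℕ} (i0 i1 : Fin m) : ∑ k, uvec i0 i1 k = 0 := by
  simp [uvec, Finset.sum_sub_distrib]

lemma uvec_self {m : ℕ} {i0 i1 : Fin m} (hi : i0 ≠ i1) : uvec i0 i1 i0 = 1 := by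
  simp [uvec, hi]

lemma uvec_other {m : ℕ} {i0 i1 : Fin m} (hi : i0 ≠ i1) : uvec i0 i1 i1 = -1 := by
  simp [uvec, hi.symm]

lemma uvec_ne {m : ℕ} {i0 i1 k : Fin m} (h0 : k ≠ i0) (h1 : k ≠ i1) : uvec i0 i1 k = 0 := by
  simp [uvec, h0, h1]

/-- perturbed matrix along a 2×2 cycle -/
noncomputable def pert {m n : ℕ} (π : Matrix (Fin m) (Fin n) ℝ) (i0 i1 : Fin m) (j0 j1 : Fin n)
    (t : ℝ) : Matrix (Fin m) (Fin n) ℝ :=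
  fun k l => π k l + t * (uvec i0 i1 k * uvec j0 j1 l)

lemma pert_vals {m n : ℕ} (π : Matrix (Fin m) (Fin n) ℝ) {i0 i1 : Fin m} {j0 j1 : Fin n}
    (hi : i0 ≠ i1) (hj : j0 ≠ j1) (t : ℝ) :
    pert π i0 i1 j0 j1 t i0 j0 = π i0 j0 + t ∧
    pert π i0 i1 j0 j1 t i1 j1 = π i1 j1 + t ∧
    pert π i0 i1 j0 j1 t i0 j1 = π i0 j1 - t ∧
    pert π i0 i1 j0 j1 t i1 j0 = π i1 j0 - t := by
  simp [pert, uvec_self hi, uvec_other hi, uvec_self hj, uvec_other hj]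
  ring_nf
  tauto

lemma pert_off {m n : ℕ} (π : Matrix (Fin m) (Fin n) ℝ) {i0 i1 : Fin m} {j0 j1 : Fin n}
    (t : ℝ) (k : Fin m) (l : Fin n)
    (h : (k ≠ i0 ∧ k ≠ i1) ∨ (l ≠ j0 ∧ l ≠ j1)) :
    pert π i0 i1 j0 j1 t k l = π k l := by
  rcases h with ⟨h1, h2⟩ | ⟨h1, h2⟩ <;> simp [pert, uvec_ne, h1, h2, uvec]

lemma pert_inU {m n : ℕ} {μ : Fin m → ℝ} {ν : Fin n → ℝ} {π : Matrix (Fin m) (Fin n) ℝ}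
    (hπ : inU μ ν π) {i0 i1 : Fin m} {j0 j1 : Fin n} (hi : i0 ≠ i1) (hj : j0 ≠ j1) {t : ℝ}
    (h00 : 0 ≤ π i0 j0 + t) (h11 : 0 ≤ π i1 j1 + t)
    (h01 : 0 ≤ π i0 j1 - t) (h10 : 0 ≤ π i1 j0 - t) :
    inU μ ν (pert π i0 i1 j0 j1 t) := by
  obtain ⟨hv1, hv2, hv3, hv4⟩ := pert_vals π hi hj t
  refine ⟨?_, ?_, ?_⟩
  · intro k l
    rcases eq_or_ne k i0 with rfl | hk0
    · rcases eq_or_ne l j0 with rfl | hl0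
      · rw [hv1]; exact h00
      · rcases eq_or_ne l j1 with rfl | hl1
        · rw [hv3]; exact h01
        · rw [pert_off π t _ _ (Or.inr ⟨hl0, hl1⟩)]; exact hπ.1 _ _
    · rcases eq_or_ne k i1 with rfl | hk1
      · rcases eq_or_ne l j0 with rfl | hl0
        · rw [hv4]; exact h10
        · rcases eq_or_ne l j1 with rfl | hl1
          · rw [hv2]; exact h11
          · rw [pert_off π t _ _ (Or.inr ⟨hl0, hl1⟩)]; exact hπ.1 _ _
      · rw [pert_off π t _ _ (Or.inl ⟨hk0, hk1⟩)]; exact hπ.1 _ _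
  · intro k
    have : ∑ l, pert π i0 i1 j0 j1 t k l
        = (∑ l, π k l) + t * uvec i0 i1 k * ∑ l, uvec j0 j1 l := by
      simp [pert, Finset.sum_add_distrib, Finset.mul_sum, mul_assoc]
    rw [this, uvec_sum, hπ.2.1 k]; ring
  · intro l
    have : ∑ k, pert π i0 i1 j0 j1 t k l
        = (∑ k, π k l) + t * uvec j0 j1 l * ∑ k, uvec i0 i1 k := by
      simp [pert, Finset.sum_add_distrib, Finset.mul_sum]
      exact Finset.sum_congr rfl fun x _ => by ring
    rw [this, uvec_sum, hπ.2.2 l]; ring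

lemma rotObj_pert {m n : ℕ} (C : Matrix (Fin m) (Fin n) ℝ) {lam : ℝ} (hlam : lam ≠ 0)
    (π : Matrix (Fin m) (Fin n) ℝ) {i0 i1 : Fin m} {j0 j1 : Fin n}
    (hi : i0 ≠ i1) (hj : j0 ≠ j1) (t : ℝ) :
    rotObj C lam (pert π i0 i1 j0 j1 t)
      = rotObj C lam π
        + t * (C i0 j0 + C i1 j1 - C i0 j1 - C i1 j0)
        + ((phi (π i0 j0 + t) - phi (π i0 j0)) + (phi (π i1 j1 + t) - phi (π i1 j1))
           + (phi (π i0 j1 - t) - phi (π i0 j1)) + (phi (π i1 j0 - t) - phi (π i1 j0))) / lam := by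
  obtain ⟨hv1, hv2, hv3, hv4⟩ := pert_vals π hi hj t
  have hA : ∑ k, ∑ l, pert π i0 i1 j0 j1 t k l * C k l
      = (∑ k, ∑ l, π k l * C k l) + t * (C i0 j0 + C i1 j1 - C i0 j1 - C i1 j0) := by
    rw [sum_cycle_eq i0 i1 j0 j1 hi hj _ (fun k l => π k l * C k l)
      (fun k l h => by rw [pert_off π t k l h])]
    rw [hv1, hv2, hv3, hv4]; ring
  have hB : ∑ k, ∑ l, pert π i0 i1 j0 j1 t k l * (Real.log (pert π i0 i1 j0 j1 t k l) - 1)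
      = (∑ k, ∑ l, π k l * (Real.log (π k l) - 1))
        + ((phi (π i0 j0 + t) - phi (π i0 j0)) + (phi (π i1 j1 + t) - phi (π i1 j1))
           + (phi (π i0 j1 - t) - phi (π i0 j1)) + (phi (π i1 j0 - t) - phi (π i1 j0))) := by
    rw [sum_cycle_eq i0 i1 j0 j1 hi hj _ (fun k l => π k l * (Real.log (π k l) - 1))
      (fun k l h => by rw [pert_off π t k l h])]
    rw [hv1, hv2, hv3, hv4]
    simp only [phi]; ring
  simp only [rotObj, hA, hB]
  field_simp
  ring

lemma hasDerivAt_phi_add {w : ℝ} (hw : 0 < w) :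
    HasDerivAt (fun t : ℝ => phi (w + t)) (Real.log w) 0 := by
  have h1 : HasDerivAt (fun t : ℝ => w + t) 1 0 := (hasDerivAt_id 0).const_add w
  have h2 : HasDerivAt (fun t : ℝ => Real.log (w + t)) (1 / (w + 0)) 0 :=
    h1.log (by simpa using hw.ne')
  have h3 := h1.mul (h2.sub_const 1)
  refine h3.congr_deriv ?_
  field_simp
  try ring

lemma hasDerivAt_phi_sub {w : ℝ} (hw : 0 < w) :
    HasDerivAt (fun t : ℝ => phi (w - t)) (-Real.log w) 0 := by
  have h1 : HasDerivAt (fun t : ℝ => w - t) (-1) 0 := by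
    simpa using (hasDerivAt_id 0).const_sub w
  have h2 : HasDerivAt (fun t : ℝ => Real.log (w - t)) ((-1) / (w - 0)) 0 :=
    h1.log (by simpa using hw.ne')
  have h3 := h1.mul (h2.sub_const 1)
  refine h3.congr_deriv ?_
  field_simp [hw.ne']
  try ring

set_option maxHeartbeats 2000000 in
theorem rot_minimizer_form (m n : ℕ) (lam : ℝ) (hlam : 0 < lam)
    (C : Matrix (Fin m) (Fin n) ℝ)
    (μ : Fin m → ℝ) (ν : Fin n → ℝ)
    (hμ0 : ∀ i, 0 < μ i) (hμ1 : ∑ i, μ i = 1)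
    (hν0 : ∀ j, 0 < ν j) (hν1 : ∑ j, ν j = 1)
    (π : Matrix (Fin m) (Fin n) ℝ) (hπ : inU μ ν π)
    (hmin : ∀ π' : Matrix (Fin m) (Fin n) ℝ, inU μ ν π' →
        rotObj C lam π ≤ rotObj C lam π') :
    (∀ i j, 0 < π i j) ∧
    ∃ (a : Fin m → ℝ) (b : Fin n → ℝ),
      ∀ i j, π i j = Real.exp (lam * (a i + b j - C i j)) := by
  have hlam' : lam ≠ 0 := hlam.ne'
  have hpos : ∀ i j, 0 < π i j := by
    intro i0 j0
    rcases (hπ.1 i0 j0).lt_or_eq with h | h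
    · exact h
    exfalso
    have h0 : π i0 j0 = 0 := h.symm
    have hj1e : ∃ j1, 0 < π i0 j1 := by
      by_contra hc; push_neg at hc
      have : ∑ l, π i0 l ≤ 0 := Finset.sum_nonpos fun l _ => hc l
      rw [hπ.2.1 i0] at this; linarith [hμ0 i0]
    obtain ⟨j1, hj1⟩ := hj1e
    have hi1e : ∃ i1, 0 < π i1 j0 := by
      by_contra hc; push_neg at hc
      have : ∑ k, π k j0 ≤ 0 := Finset.sum_nonpos fun k _ => hc k
      rw [hπ.2.2 j0] at this; linarith [hν0 j0]
    obtain ⟨i1, hi1⟩ := hi1e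
    have hii : i0 ≠ i1 := fun he => by rw [← he] at hi1; linarith
    have hjj : j0 ≠ j1 := fun he => by rw [← he] at hj1; linarith
    set p1 := π i0 j1 with hp1
    set p2 := π i1 j0 with hp2
    set q := π i1 j1 with hq
    have hq0 : (0:ℝ) ≤ q := hπ.1 i1 j1
    set s := C i0 j0 + C i1 j1 - C i0 j1 - C i1 j0 with hs
    set K := Real.log (q + 1) - Real.log (p1 / 2) - Real.log (p2 / 2) with hK
    set t := min (min (p1 / 2) (p2 / 2)) (min 1 (Real.exp (-lam * s - K * 1 - 1))) with ht
    have ht0 : 0 < t :=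
      lt_min (lt_min (by linarith) (by linarith)) (lt_min one_pos (Real.exp_pos _))
    have htp1 : t ≤ p1 / 2 := le_trans (min_le_left _ _) (min_le_left _ _)
    have htp2 : t ≤ p2 / 2 := le_trans (min_le_left _ _) (min_le_right _ _)
    have ht1 : t ≤ 1 := le_trans (min_le_right _ _) (min_le_left _ _)
    have hte : t ≤ Real.exp (-lam * s - K * 1 - 1) :=
      le_trans (min_le_right _ _) (min_le_right _ _)
    have hfeas : inU μ ν (pert π i0 i1 j0 j1 t) :=
      pert_inU hπ hii hjj (by linarith) (by linarith) (by linarith) (by linarith)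
    have hkey := rotObj_pert C hlam' π hii hjj t
    have b1 : phi (π i0 j0 + t) - phi (π i0 j0) ≤ t * Real.log t := by
      rw [h0, zero_add]
      have := phi_diff_le le_rfl ht0
      simpa [phi] using this
    have b2 : phi (q + t) - phi q ≤ t * Real.log (q + 1) := by
      have h1 := phi_diff_le hq0 (show (0:ℝ) < q + t by linarith)
      have h2 : Real.log (q + t) ≤ Real.log (q + 1) :=
        Real.log_le_log (by linarith) (by linarith)
      have h3 : (q + t - q) * Real.log (q + t) = t * Real.log (q + t) := by ring
      nlinarith [mul_le_mul_of_nonneg_left h2 ht0.le]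
    have b3 : phi (p1 - t) - phi p1 ≤ -(t * Real.log (p1 / 2)) := by
      have h1 := phi_diff_le (show (0:ℝ) ≤ p1 by linarith) (show (0:ℝ) < p1 - t by linarith)
      have h2 : Real.log (p1 / 2) ≤ Real.log (p1 - t) :=
        Real.log_le_log (by linarith) (by linarith)
      nlinarith [mul_le_mul_of_nonneg_left h2 ht0.le]
    have b4 : phi (p2 - t) - phi p2 ≤ -(t * Real.log (p2 / 2)) := by
      have h1 := phi_diff_le (show (0:ℝ) ≤ p2 by linarith) (show (0:ℝ) < p2 - t by linarith)
      have h2 : Real.log (p2 / 2) ≤ Real.log (p2 - t) :=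
        Real.log_le_log (by linarith) (by linarith)
      nlinarith [mul_le_mul_of_nonneg_left h2 ht0.le]
    have hlogt : Real.log t ≤ -lam * s - K - 1 := by
      have := Real.log_le_log ht0 hte
      rw [Real.log_exp] at this
      linarith
    have hΔ : (phi (π i0 j0 + t) - phi (π i0 j0)) + (phi (q + t) - phi q)
        + (phi (p1 - t) - phi p1) + (phi (p2 - t) - phi p2)
        ≤ t * (-lam * s - 1) := by
      have hsum : (phi (π i0 j0 + t) - phi (π i0 j0)) + (phi (q + t) - phi q)
          + (phi (p1 - t) - phi p1) + (phi (p2 - t) - phi p2)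
          ≤ t * (Real.log t + K) := by
        have hexp : t * (Real.log t + K) = t * Real.log t + t * Real.log (q + 1)
            - t * Real.log (p1 / 2) - t * Real.log (p2 / 2) := by rw [hK]; ring
        rw [hexp]
        linarith [b1, b2, b3, b4]
      have : t * (Real.log t + K) ≤ t * (-lam * s - 1) :=
        mul_le_mul_of_nonneg_left (by linarith) ht0.le
      linarith
    have hdiv : ((phi (π i0 j0 + t) - phi (π i0 j0)) + (phi (q + t) - phi q)
        + (phi (p1 - t) - phi p1) + (phi (p2 - t) - phi p2)) / lam
        ≤ (t * (-lam * s - 1)) / lam := by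
      exact div_le_div_of_nonneg_right hΔ hlam.le
    have heq : (t * (-lam * s - 1)) / lam = -t * s - t / lam := by
      field_simp
    have hlt : rotObj C lam (pert π i0 i1 j0 j1 t) < rotObj C lam π := by
      rw [hkey]
      have : t / lam > 0 := by positivity
      calc rotObj C lam π + t * s
            + ((phi (π i0 j0 + t) - phi (π i0 j0)) + (phi (q + t) - phi q)
               + (phi (p1 - t) - phi p1) + (phi (p2 - t) - phi p2)) / lam
          ≤ rotObj C lam π + t * s + (-t * s - t / lam) := by
            rw [← heq]; linarith [hdiv]
        _ = rotObj C lam π - t / lam := by ring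
        _ < rotObj C lam π := by linarith
    linarith [hmin _ hfeas, hlt]
  refine ⟨hpos, ?_⟩
  by_cases hm : m = 0
  · subst hm; exact ⟨fun _ => 0, fun _ => 0, fun i => i.elim0⟩
  by_cases hn : n = 0
  · subst hn; exact ⟨fun _ => 0, fun _ => 0, fun _ j => j.elim0⟩
  have hm' : 0 < m := Nat.pos_of_ne_zero hm
  have hn' : 0 < n := Nat.pos_of_ne_zero hn
  set i₀ : Fin m := ⟨0, hm'⟩ with hi₀
  set j₀ : Fin n := ⟨0, hn'⟩ with hj₀
  set M : Fin m → Fin n → ℝ := fun i j => C i j + Real.log (π i j) / lam with hMdef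
  have key : ∀ (i i' : Fin m) (j j' : Fin n), i ≠ i' → j ≠ j' →
      M i j + M i' j' = M i j' + M i' j := by
    intro i i' j j' hii hjj
    have hd : HasDerivAt (fun t => rotObj C lam (pert π i i' j j' t))
        ((C i j + C i' j' - C i j' - C i' j)
          + (Real.log (π i j) + Real.log (π i' j')
             - Real.log (π i j') - Real.log (π i' j)) / lam) 0 := by
      have hfun : (fun t => rotObj C lam (pert π i i' j j' t)) = fun t =>
          rotObj C lam π + t * (C i j + C i' j' - C i j' - C i' j)
          + ((phi (π i j + t) - phi (π i j)) + (phi (π i' j' + t) - phi (π i' j'))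
             + (phi (π i j' - t) - phi (π i j')) + (phi (π i' j - t) - phi (π i' j))) / lam := by
        funext t; exact rotObj_pert C hlam' π hii hjj t
      rw [hfun]
      have d1 := (hasDerivAt_phi_add (hpos i j)).sub_const (phi (π i j))
      have d2 := (hasDerivAt_phi_add (hpos i' j')).sub_const (phi (π i' j'))
      have d3 := (hasDerivAt_phi_sub (hpos i j')).sub_const (phi (π i j'))
      have d4 := (hasDerivAt_phi_sub (hpos i' j)).sub_const (phi (π i' j))
      have dsum := (((d1.add d2).add d3).add d4).div_const lam
      have dlin : HasDerivAt
          (fun t : ℝ => rotObj C lam π + t * (C i j + C i' j' - C i j' - C i' j))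
          (C i j + C i' j' - C i j' - C i' j) 0 := by
        simpa using ((hasDerivAt_id (0:ℝ)).mul_const
          (C i j + C i' j' - C i j' - C i' j)).const_add (rotObj C lam π)
      have hcomb := dlin.add dsum
      exact hcomb.congr_deriv (by ring)
    have hlocmin : IsLocalMin (fun t => rotObj C lam (pert π i i' j j' t)) 0 := by
      have hε : (0:ℝ) < min (min (π i j) (π i' j')) (min (π i j') (π i' j)) :=
        lt_min (lt_min (hpos i j) (hpos i' j')) (lt_min (hpos i j') (hpos i' j))
      have hev : ∀ᶠ t in nhds (0:ℝ),
          (fun t => rotObj C lam (pert π i i' j j' t)) 0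
            ≤ (fun t => rotObj C lam (pert π i i' j j' t)) t := by
        rw [Metric.eventually_nhds_iff]
        refine ⟨_, hε, fun t htd => ?_⟩
        have habs : |t| < min (min (π i j) (π i' j')) (min (π i j') (π i' j)) := by
          rwa [Real.dist_eq, sub_zero] at htd
        have ha1 : |t| < π i j := lt_of_lt_of_le habs
          (le_trans (min_le_left _ _) (min_le_left _ _))
        have ha2 : |t| < π i' j' := lt_of_lt_of_le habs
          (le_trans (min_le_left _ _) (min_le_right _ _))
        have ha3 : |t| < π i j' := lt_of_lt_of_le habs
          (le_trans (min_le_right _ _) (min_le_left _ _))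
        have ha4 : |t| < π i' j := lt_of_lt_of_le habs
          (le_trans (min_le_right _ _) (min_le_right _ _))
        have hna := neg_abs_le t
        have hpa := le_abs_self t
        have hfeas : inU μ ν (pert π i i' j j' t) :=
          pert_inU hπ hii hjj (by linarith) (by linarith) (by linarith) (by linarith)
        have h00eq : pert π i i' j j' 0 = π := by
          funext k l; simp [pert]
        simp only [h00eq]
        exact hmin _ hfeas
      exact hev
    have h0 := hlocmin.hasDerivAt_eq_zero hd
    simp only [hMdef]
    field_simp at h0 ⊢
    linarith
  refine ⟨fun i => M i j₀ - M i₀ j₀, fun j => M i₀ j, fun i j => ?_⟩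
  have hMij : M i j = (M i j₀ - M i₀ j₀) + M i₀ j := by
    rcases eq_or_ne i i₀ with rfl | hi
    · ring
    · rcases eq_or_ne j j₀ with rfl | hj
      · ring
      · have := key i i₀ j j₀ hi hj
        linarith
  rw [← Real.exp_log (hpos i j)]
  congr 1
  have hlogM : Real.log (π i j) = lam * (M i j - C i j) := by
    simp only [hMdef]
    field_simp
    try ring
  rw [hlogM, hMij]
  try ring
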